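/- For odd n ≥ 3, the super edge-magic total strength of the cycle C_n equals (5n+3)/2. -/

import Mathlib

/-- A super edge-magic total labeling of a graph `G` with `p = Fintype.card V` vertices and
`q = G.edgeSet.ncard` edges: `fv` maps the vertices bijectively onto `{1,…,p}`, `fe` maps the
edges bijectively onto `{p+1,…,p+q}` (so together they form a bijection of `V ∪ E` onto
`{1,…,p+q}` with `f(V) = {1,…,p}`), and every edge `uv` satisfies `f(u)+f(v)+f(uv) = c`. -/
def IsSEMT {V : Type*} [Fintype V] (G : SimpleGraph V)
    (fv : V → ℕ) (fe : Sym2 V → ℕ) (c : ℕ) : Prop :=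
  Set.BijOn fv Set.univ (Set.Icc 1 (Fintype.card V)) ∧
  Set.BijOn fe G.edgeSet
    (Set.Icc (Fintype.card V + 1) (Fintype.card V + G.edgeSet.ncard)) ∧
  ∀ u v, G.Adj u v → fv u + fv v + fe s(u, v) = c

namespace SEMTAux

open Finset SimpleGraph

/-- The edge from `i` to `i+1`. -/
def Ecyc (m : ℕ) (i : Fin (2*m+3)) : Sym2 (Fin (2*m+3)) := s(i, i+1)

lemma val_one (m : ℕ) : (1 : Fin (2*m+3)).val = 1 := by
  have : (1 : Fin (2*m+3)).val = 1 % (2*m+3) := rfl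
  rw [this, Nat.mod_eq_of_lt (by omega)]

lemma val_add_one (m : ℕ) (i : Fin (2*m+3)) :
    ((i + 1 : Fin (2*m+3))).val = if i.val = 2*m+2 then 0 else i.val + 1 := by
  rw [Fin.val_add, val_one]
  have hi := i.isLt
  split_ifs with h
  · rw [h, show 2*m+2+1 = 2*m+3 by omega, Nat.mod_self]
  · rw [Nat.mod_eq_of_lt (by omega)]

lemma Ecyc_inj (m : ℕ) : Function.Injective (Ecyc m) := by
  intro i j h
  simp only [Ecyc, Sym2.eq, Sym2.rel_iff', Prod.mk.injEq, Prod.swap_prod_mk] at h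
  rcases h with ⟨h1, _⟩ | ⟨h1, h2⟩
  · exact h1
  · apply Fin.ext
    have e1 := congrArg Fin.val h1
    have e2 := congrArg Fin.val h2
    rw [val_add_one] at e1 e2
    have hi := i.isLt
    have hj := j.isLt
    split_ifs at e1 e2 <;> omega

lemma adj_succ (m : ℕ) (i : Fin (2*m+3)) :
    (cycleGraph (2*m+3)).Adj i (i+1) := by
  rw [cycleGraph_adj']
  right
  rw [add_sub_cancel_left, val_one]

lemma edgeSet_eq (m : ℕ) :
    (cycleGraph (2*m+3)).edgeSet = Set.range (Ecyc m) := by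
  ext e
  induction e with
  | _ u v =>
    simp only [mem_edgeSet, Set.mem_range]
    constructor
    · intro h
      rw [cycleGraph_adj'] at h
      rcases h with h | h
      · refine ⟨v, ?_⟩
        have : u = v + 1 := by
          have hu : u - v = 1 := Fin.ext (by rw [val_one]; exact h)
          exact (eq_add_of_sub_eq hu).trans (add_comm 1 v)
        rw [Ecyc, this, Sym2.eq_swap]
      · refine ⟨u, ?_⟩
        have : v = u + 1 := by
          have hv : v - u = 1 := Fin.ext (by rw [val_one]; exact h)
          exact (eq_add_of_sub_eq hv).trans (add_comm 1 u)
        rw [Ecyc, this]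
    · rintro ⟨i, hi⟩
      have hadj := adj_succ m i
      rw [Ecyc] at hi
      rcases Sym2.eq_iff.mp hi with ⟨h1, h2⟩ | ⟨h1, h2⟩
      · rw [← h1, ← h2]; exact hadj
      · rw [← h1, ← h2]; exact hadj.symm

lemma ncard_edgeSet (m : ℕ) : (cycleGraph (2*m+3)).edgeSet.ncard = 2*m+3 := by
  rw [edgeSet_eq, ← Set.image_univ, Set.ncard_image_of_injective _ (Ecyc_inj m),
    Set.ncard_univ, Nat.card_eq_fintype_card, Fintype.card_fin]

/-- Sum over a fintype of a function bijecting onto an interval. -/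
lemma sum_of_bijOn {α : Type*} [Fintype α] {f : α → ℕ} {a b : ℕ}
    (h : Set.BijOn f Set.univ (Set.Icc a b)) :
    ∑ i, f i = ∑ j ∈ Finset.Icc a b, j := by
  apply Finset.sum_bij (fun i _ => f i)
  · intro i _
    have := h.mapsTo (Set.mem_univ i)
    simpa [Finset.mem_Icc, Set.mem_Icc] using this
  · intro i _ j _ hij
    exact h.injOn trivial trivial hij
  · intro j hj
    obtain ⟨i, _, hi⟩ := h.surjOn (by simpa [Set.mem_Icc, Finset.mem_Icc] using hj)
    exact ⟨i, Finset.mem_univ i, hi⟩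
  · intros; rfl

lemma two_mul_sum_Icc (a b : ℕ) (h : a ≤ b + 1) :
    2 * ∑ j ∈ Finset.Icc a b, j = (a + b) * (b + 1 - a) := by
  obtain ⟨d, hd⟩ : ∃ d, b + 1 = a + d := ⟨b + 1 - a, by omega⟩
  rw [← Finset.Ico_add_one_right_eq_Icc, hd, Finset.sum_Ico_eq_sum_range]
  rw [show a + d - a = d by omega]
  rw [Finset.sum_add_distrib, Finset.sum_const, Finset.card_range, smul_eq_mul]
  have h2 := Finset.sum_range_id_mul_two d
  rcases d with _ | d
  · simp
  · rw [Nat.succ_sub_one] at h2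
    nlinarith [h2]

section Forcing

variable {m c : ℕ} {fv : Fin (2*m+3) → ℕ} {fe : Sym2 (Fin (2*m+3)) → ℕ}

lemma forcing (h : IsSEMT (cycleGraph (2*m+3)) fv fe c) : c = 5*m+9 := by
  obtain ⟨h1, h2, h3⟩ := h
  rw [Fintype.card_fin] at h1 h2
  rw [ncard_edgeSet, edgeSet_eq] at h2
  -- bijection of Fin n with the edge set
  have hE : Set.BijOn (Ecyc m) Set.univ (Set.range (Ecyc m)) := by
    rw [← Set.image_univ]
    exact ((Ecyc_inj m).injOn).bijOn_image
  have hcomp : Set.BijOn (fun i => fe (Ecyc m i)) Set.univ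
      (Set.Icc (2*m+3+1) (2*m+3+(2*m+3))) := h2.comp hE
  -- the three sums
  have hv : ∑ i, fv i = ∑ j ∈ Finset.Icc 1 (2*m+3), j := sum_of_bijOn h1
  have he : ∑ i, fe (Ecyc m i) = ∑ j ∈ Finset.Icc (2*m+3+1) (2*m+3+(2*m+3)), j :=
    sum_of_bijOn hcomp
  have hshift : ∑ i : Fin (2*m+3), fv (i+1) = ∑ i, fv i :=
    Fintype.sum_equiv (Equiv.addRight 1) _ _ (fun i => rfl)
  have hmagic : ∀ i : Fin (2*m+3), fv i + fv (i+1) + fe (Ecyc m i) = c :=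
    fun i => h3 i (i+1) (adj_succ m i)
  have hsum : ∑ i : Fin (2*m+3), (fv i + fv (i+1) + fe (Ecyc m i)) = (2*m+3) * c := by
    rw [Finset.sum_congr rfl (fun i _ => hmagic i), Finset.sum_const, Finset.card_univ,
      Fintype.card_fin, smul_eq_mul]
  rw [Finset.sum_add_distrib, Finset.sum_add_distrib, hshift, hv, he] at hsum
  have gv : 2 * ∑ j ∈ Finset.Icc 1 (2*m+3), j = (2*m+4) * (2*m+3) := by
    rw [two_mul_sum_Icc 1 (2*m+3) (by omega)]
    congr 1 <;> omega
  have ge : 2 * ∑ j ∈ Finset.Icc (2*m+3+1) (2*m+3+(2*m+3)), j = (6*m+10) * (2*m+3) := by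
    rw [two_mul_sum_Icc _ _ (by omega)]
    congr 1 <;> omega
  have key : (2*m+3) * (2 * c) = (2*m+3) * (10*m+18) := by
    zify at hsum gv ge ⊢
    linear_combination (-2 : ℤ) * hsum + 2 * gv + ge
  have := Nat.eq_of_mul_eq_mul_left (show 0 < 2*m+3 by omega) key
  omega

end Forcing

/-- The vertex labeling. -/
def fvL (m : ℕ) (i : Fin (2*m+3)) : ℕ :=
  if i.val % 2 = 0 then i.val / 2 + 1 else m + 3 + i.val / 2

/-- The edge labeling. -/
def feL (m : ℕ) (e : Sym2 (Fin (2*m+3))) : ℕ :=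
  5*m+9 - Sym2.lift ⟨fun u v => fvL m u + fvL m v, fun u v => by ring⟩ e

lemma fvL_le (m : ℕ) (i : Fin (2*m+3)) : fvL m i ≤ 2*m+3 := by
  have := i.isLt
  rw [fvL]
  split_ifs <;> omega

lemma fvL_bijOn (m : ℕ) :
    Set.BijOn (fvL m) Set.univ (Set.Icc 1 (2*m+3)) := by
  refine ⟨?_, ?_, ?_⟩
  · intro i _
    have := i.isLt
    simp only [Set.mem_Icc, fvL]
    split_ifs <;> omega
  · intro i _ j _ h
    apply Fin.ext
    have hi := i.isLt
    have hj := j.isLt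
    rw [fvL, fvL] at h
    split_ifs at h <;> omega
  · intro k hk
    simp only [Set.mem_Icc] at hk
    by_cases h : k ≤ m + 2
    · refine ⟨⟨2*(k-1), by omega⟩, Set.mem_univ _, ?_⟩
      rw [fvL]
      simp only
      rw [if_pos (by omega)]
      omega
    · refine ⟨⟨2*(k-m-3)+1, by omega⟩, Set.mem_univ _, ?_⟩
      rw [fvL]
      simp only
      rw [if_neg (by omega)]
      omega

lemma feL_Ecyc (m : ℕ) (i : Fin (2*m+3)) :
    feL m (Ecyc m i) = if i.val = 2*m+2 then 4*m+6 else 4*m+5 - i.val := by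
  have hi := i.isLt
  have hv := val_add_one m i
  rw [Ecyc, feL, Sym2.lift_mk]
  simp only [fvL, hv]
  split_ifs <;> omega

lemma feL_bijOn (m : ℕ) :
    Set.BijOn (feL m) (Set.range (Ecyc m)) (Set.Icc (2*m+4) (4*m+6)) := by
  refine ⟨?_, ?_, ?_⟩
  · rintro e ⟨i, rfl⟩
    have hi := i.isLt
    rw [feL_Ecyc]
    simp only [Set.mem_Icc]
    split_ifs <;> omega
  · rintro e ⟨i, rfl⟩ e' ⟨j, rfl⟩ h
    have hi := i.isLt
    have hj := j.isLt
    rw [feL_Ecyc, feL_Ecyc] at h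
    have : i = j := by
      apply Fin.ext
      split_ifs at h <;> omega
    rw [this]
  · intro k hk
    simp only [Set.mem_Icc] at hk
    by_cases h : k = 4*m+6
    · refine ⟨Ecyc m ⟨2*m+2, by omega⟩, ⟨_, rfl⟩, ?_⟩
      rw [feL_Ecyc, if_pos rfl]
      omega
    · refine ⟨Ecyc m ⟨4*m+5-k, by omega⟩, ⟨_, rfl⟩, ?_⟩
      rw [feL_Ecyc, if_neg (show ¬(4*m+5-k = 2*m+2) by omega)]
      show 4*m+5 - (4*m+5-k) = k
      omega

lemma construction (m : ℕ) :
    IsSEMT (cycleGraph (2*m+3)) (fvL m) (feL m) (5*m+9) := by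
  refine ⟨?_, ?_, ?_⟩
  · rw [Fintype.card_fin]
    exact fvL_bijOn m
  · rw [Fintype.card_fin, ncard_edgeSet, edgeSet_eq,
      show (2*m+3)+1 = 2*m+4 by omega, show (2*m+3)+(2*m+3) = 4*m+6 by omega]
    exact feL_bijOn m
  · intro u v _
    have h1 := fvL_le m u
    have h2 := fvL_le m v
    simp only [feL, Sym2.lift_mk]
    omega

end SEMTAux

/-- For odd `n ≥ 3`, the super edge-magic total strength of the cycle `Cₙ` is `(5n+3)/2`. -/
theorem stmt_5 (n : ℕ) (hn : 3 ≤ n) (ho : Odd n) :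
    sInf {c | ∃ fv fe, IsSEMT (SimpleGraph.cycleGraph n) fv fe c} = (5 * n + 3) / 2 := by
  obtain ⟨m, rfl⟩ : ∃ m, n = 2*m+3 := ⟨(n-3)/2, by obtain ⟨k, hk⟩ := ho; omega⟩
  have hset : {c | ∃ fv fe, IsSEMT (SimpleGraph.cycleGraph (2*m+3)) fv fe c} = {5*m+9} := by
    apply Set.eq_singleton_iff_unique_mem.mpr
    constructor
    · exact ⟨_, _, SEMTAux.construction m⟩
    · rintro c ⟨fv, fe, h⟩
      exact SEMTAux.forcing h
  rw [hset, csInf_singleton]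
  omega
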